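/- In U(sl(2))[[ξ]], with h, x satisfying [h,x] = 2x, let σ = (1/2) log(1 + 2ξx) and F = exp((1/2) h ⊗ log(1 + 2ξx)) = exp(h ⊗ σ). Then F satisfies the 2-cocycle (twist) equation (F ⊗ 1)((Δ ⊗ id)F) = (1 ⊗ F)((id ⊗ Δ)F) modulo ξ³, where Δ is the standard (cocommutative) coproduct Δ(a) = a ⊗ 1 + 1 ⊗ a on generators. -/

import Mathlib

open scoped TensorProduct
set_option maxHeartbeats 1000000
set_option synthInstance.maxHeartbeats 400000

noncomputable section

attribute [local instance] LieRing.ofAssociativeRing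

abbrev gl2 := Matrix (Fin 2) (Fin 2) ℚ
abbrev A := UniversalEnvelopingAlgebra ℚ gl2

noncomputable def ι : gl2 → A := fun a => UniversalEnvelopingAlgebra.ι ℚ a

noncomputable def hgen : A := ι (Matrix.single 0 0 1 - Matrix.single 1 1 1)
noncomputable def xgen : A := ι (Matrix.single 0 1 1)

/-- the ξ-expansion of F = exp(h ⊗ (1/2)log(1+2ξx)) through order ξ² -/
noncomputable def F (ξ : ℚ) : A ⊗[ℚ] A :=
  1 + ξ • (hgen ⊗ₜ[ℚ] xgen) +
    ξ ^ 2 • ((1 / 2 : ℚ) • ((hgen * hgen) ⊗ₜ[ℚ] (xgen * xgen)) - hgen ⊗ₜ[ℚ] (xgen * xgen))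

noncomputable def q12 : A ⊗[ℚ] A →ₐ[ℚ] (A ⊗[ℚ] A) ⊗[ℚ] A :=
  Algebra.TensorProduct.includeLeft

noncomputable def q23 : A ⊗[ℚ] A →ₐ[ℚ] (A ⊗[ℚ] A) ⊗[ℚ] A :=
  Algebra.TensorProduct.map Algebra.TensorProduct.includeRight (AlgHom.id ℚ A)

lemma matcomm : ⁅(Matrix.single 0 0 1 - Matrix.single 1 1 1 : gl2),
    (Matrix.single 0 1 1 : gl2)⁆ = (2:ℚ) • Matrix.single 0 1 1 := by
  rw [Ring.lie_def]
  ext i j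
  fin_cases i <;> fin_cases j <;>
    simp [Matrix.mul_apply, Matrix.single, Fin.sum_univ_two] <;> norm_num

lemma hx_comm : xgen * hgen = hgen * xgen - (2:ℚ) • xgen := by
  have h1 : hgen * xgen - xgen * hgen = (2:ℚ) • xgen := by
    have := (UniversalEnvelopingAlgebra.ι ℚ (L := gl2)).map_lie
      (x := (Matrix.single 0 0 1 - Matrix.single 1 1 1 : gl2))
      (y := (Matrix.single 0 1 1 : gl2))
    rw [matcomm, map_smul, Ring.lie_def] at this
    simpa [hgen, xgen, ι] using this.symm
  linear_combination (norm := abel) -h1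

noncomputable def Pa : (A ⊗[ℚ] A) ⊗[ℚ] A := (hgen ⊗ₜ[ℚ] xgen) ⊗ₜ[ℚ] 1
noncomputable def Pb : (A ⊗[ℚ] A) ⊗[ℚ] A :=
  (1/2:ℚ) • (((hgen*hgen) ⊗ₜ[ℚ] (xgen*xgen)) ⊗ₜ[ℚ] (1:A)) -
    (hgen ⊗ₜ[ℚ] (xgen*xgen)) ⊗ₜ[ℚ] (1:A)
noncomputable def Pc : (A ⊗[ℚ] A) ⊗[ℚ] A :=
  (hgen ⊗ₜ[ℚ] (1:A)) ⊗ₜ[ℚ] xgen + ((1:A) ⊗ₜ[ℚ] hgen) ⊗ₜ[ℚ] xgen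
noncomputable def Pd : (A ⊗[ℚ] A) ⊗[ℚ] A :=
  (1/2:ℚ) • (((hgen*hgen) ⊗ₜ[ℚ] (1:A)) ⊗ₜ[ℚ] (xgen*xgen)) +
    (hgen ⊗ₜ[ℚ] hgen) ⊗ₜ[ℚ] (xgen*xgen) +
    (1/2:ℚ) • (((1:A) ⊗ₜ[ℚ] (hgen*hgen)) ⊗ₜ[ℚ] (xgen*xgen)) -
    (hgen ⊗ₜ[ℚ] (1:A)) ⊗ₜ[ℚ] (xgen*xgen) - ((1:A) ⊗ₜ[ℚ] hgen) ⊗ₜ[ℚ] (xgen*xgen)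
noncomputable def Pe : (A ⊗[ℚ] A) ⊗[ℚ] A := ((1:A) ⊗ₜ[ℚ] hgen) ⊗ₜ[ℚ] xgen
noncomputable def Pf : (A ⊗[ℚ] A) ⊗[ℚ] A :=
  (1/2:ℚ) • (((1:A) ⊗ₜ[ℚ] (hgen*hgen)) ⊗ₜ[ℚ] (xgen*xgen)) -
    ((1:A) ⊗ₜ[ℚ] hgen) ⊗ₜ[ℚ] (xgen*xgen)
noncomputable def Pg : (A ⊗[ℚ] A) ⊗[ℚ] A :=
  (hgen ⊗ₜ[ℚ] xgen) ⊗ₜ[ℚ] (1:A) + (hgen ⊗ₜ[ℚ] (1:A)) ⊗ₜ[ℚ] xgen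
noncomputable def Ph : (A ⊗[ℚ] A) ⊗[ℚ] A :=
  (1/2:ℚ) • (((hgen*hgen) ⊗ₜ[ℚ] (xgen*xgen)) ⊗ₜ[ℚ] (1:A)) +
    ((hgen*hgen) ⊗ₜ[ℚ] xgen) ⊗ₜ[ℚ] xgen +
    (1/2:ℚ) • (((hgen*hgen) ⊗ₜ[ℚ] (1:A)) ⊗ₜ[ℚ] (xgen*xgen)) -
    (hgen ⊗ₜ[ℚ] (xgen*xgen)) ⊗ₜ[ℚ] (1:A) -
    (2:ℚ) • ((hgen ⊗ₜ[ℚ] xgen) ⊗ₜ[ℚ] xgen) -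
    (hgen ⊗ₜ[ℚ] (1:A)) ⊗ₜ[ℚ] (xgen*xgen)

theorem jordanian_twist_cocycle_mod_xi_cubed
    (Δ : A →ₐ[ℚ] A ⊗[ℚ] A)
    -- Δ is the standard cocommutative coproduct on generators
    (hΔ : ∀ a : gl2, Δ (ι a) = ι a ⊗ₜ[ℚ] 1 + 1 ⊗ₜ[ℚ] ι a) :
    ∃ c : ℕ → (A ⊗[ℚ] A) ⊗[ℚ] A, ∀ ξ : ℚ,
      q12 (F ξ) * (Algebra.TensorProduct.map Δ (AlgHom.id ℚ A)) (F ξ) -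
      q23 (F ξ) * (Algebra.TensorProduct.assoc ℚ ℚ ℚ A A A).symm
          ((Algebra.TensorProduct.map (AlgHom.id ℚ A) Δ) (F ξ)) =
      ∑ n ∈ Finset.Icc 3 4, ξ ^ n • c n := by
  have ΔH : Δ hgen = hgen ⊗ₜ[ℚ] 1 + 1 ⊗ₜ[ℚ] hgen := hΔ _
  have ΔX : Δ xgen = xgen ⊗ₜ[ℚ] 1 + 1 ⊗ₜ[ℚ] xgen := hΔ _
  refine ⟨fun n => if n = 3 then Pa * Pd + Pb * Pc - Pe * Ph - Pf * Pg
      else Pb * Pd - Pf * Ph, fun ξ => ?_⟩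
  have L1 : q12 (F ξ) = 1 + ξ • Pa + ξ ^ 2 • Pb := by
    simp only [F, q12, Pa, Pb, Algebra.TensorProduct.includeLeft_apply,
      TensorProduct.add_tmul, TensorProduct.sub_tmul, TensorProduct.tmul_smul,
      ← TensorProduct.smul_tmul', Algebra.TensorProduct.one_def]
  have L2 : (Algebra.TensorProduct.map Δ (AlgHom.id ℚ A)) (F ξ)
      = 1 + ξ • Pc + ξ ^ 2 • Pd := by
    simp only [F, map_add, map_smul, map_sub, map_one, Algebra.TensorProduct.map_tmul,
      AlgHom.coe_id, id_eq, map_mul, ΔH, ΔX]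
    simp only [Pc, Pd, add_mul, mul_add, Algebra.TensorProduct.tmul_mul_tmul, one_mul, mul_one,
      TensorProduct.add_tmul, TensorProduct.sub_tmul, TensorProduct.tmul_add,
      TensorProduct.tmul_sub, TensorProduct.tmul_smul, ← TensorProduct.smul_tmul',
      Algebra.TensorProduct.one_def]
    module
  have L3 : q23 (F ξ) = 1 + ξ • Pe + ξ ^ 2 • Pf := by
    simp only [F, q23, Pe, Pf, map_add, map_one, map_smul, map_sub,
      Algebra.TensorProduct.map_tmul, Algebra.TensorProduct.includeRight_apply,
      AlgHom.coe_id, id_eq, TensorProduct.add_tmul, TensorProduct.sub_tmul,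
      TensorProduct.tmul_smul, ← TensorProduct.smul_tmul', Algebra.TensorProduct.one_def]
  have L4 : (Algebra.TensorProduct.assoc ℚ ℚ ℚ A A A).symm
      ((Algebra.TensorProduct.map (AlgHom.id ℚ A) Δ) (F ξ)) = 1 + ξ • Pg + ξ ^ 2 • Ph := by
    simp only [F, map_add, map_smul, map_sub, map_one, Algebra.TensorProduct.map_tmul,
      AlgHom.coe_id, id_eq, map_mul, ΔH, ΔX]
    simp only [add_mul, mul_add, Algebra.TensorProduct.tmul_mul_tmul, one_mul, mul_one,
      TensorProduct.tmul_add, TensorProduct.tmul_sub, TensorProduct.tmul_smul, map_add, map_smul, map_sub,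
      Algebra.TensorProduct.assoc_symm_tmul]
    simp only [Pg, Ph]
    module
  have key : ∀ u v w z : (A ⊗[ℚ] A) ⊗[ℚ] A,
      (1 + ξ • u + ξ ^ 2 • v) * (1 + ξ • w + ξ ^ 2 • z)
      = 1 + ξ • (u + w) + ξ ^ 2 • (v + z + u * w) + ξ ^ 3 • (u * z + v * w)
        + ξ ^ 4 • (v * z) := by
    intro u v w z
    simp only [mul_add, add_mul, one_mul, mul_one, smul_mul_smul_comm, smul_mul_assoc,
      mul_smul_comm]
    module
  have h1 : Pa + Pc = Pe + Pg := by
    simp only [Pa, Pc, Pe, Pg]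
    abel
  have h2 : Pb + Pd + Pa * Pc = Pf + Ph + Pe * Pg := by
    simp only [Pa, Pb, Pc, Pd, Pe, Pf, Pg, Ph, mul_add, add_mul, sub_mul, mul_sub,
      smul_mul_assoc, mul_smul_comm, Algebra.TensorProduct.tmul_mul_tmul, one_mul, mul_one,
      hx_comm, TensorProduct.tmul_sub, TensorProduct.sub_tmul, TensorProduct.tmul_smul, TensorProduct.smul_tmul']
    module
  rw [L1, L2, L3, L4, key, key, h1, h2]
  have hIcc : Finset.Icc 3 4 = ({3, 4} : Finset ℕ) := rfl
  rw [hIcc, Finset.sum_insert (by decide), Finset.sum_singleton]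
  norm_num
  module
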